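/- Any strongly regular graph with parameters (n, k, q, p) where q <= p - 2 is uniquely B_p-saturated. -/

import Mathlib

open SimpleGraph

/-- The diamond graph `C₄⁺`: a `4`-cycle with one chord, i.e. `K₄` minus an edge. -/
def diamond : SimpleGraph (Fin 4) := (⊤ : SimpleGraph (Fin 4)).deleteEdges {s(0, 1)}

/-- `G'` is a copy of `H` in `G`, i.e. a subgraph of `G` isomorphic to `H`. -/
def IsCopy {W V : Type*} (H : SimpleGraph W) {G : SimpleGraph V} (G' : G.Subgraph) : Prop :=
  Nonempty (G'.coe ≃g H)

/-- `G` is uniquely `H`-saturated: `G` is `H`-free, and adding any non-edge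
creates exactly one copy of `H`. -/
def UniquelySaturated {W V : Type*} (H : SimpleGraph W) (G : SimpleGraph V) : Prop :=
  (∀ G' : G.Subgraph, ¬ IsCopy H G') ∧
    ∀ u v : V, u ≠ v → ¬ G.Adj u v →
      ∃! G' : (G ⊔ SimpleGraph.fromEdgeSet {s(u, v)}).Subgraph, IsCopy H G'

/-- The book graph `B_p`: `p` triangles sharing a common edge. The common (rootlet)
edge joins vertices `0` and `1`, and the `p` page vertices are joined to both. -/
def book (p : ℕ) : SimpleGraph (Fin (p + 2)) :=
  SimpleGraph.fromRel fun u v => u.val < 2 ∨ v.val < 2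

lemma book_adj {p : ℕ} (i j : Fin (p+2)) :
    (book p).Adj i j ↔ i ≠ j ∧ (i.val < 2 ∨ j.val < 2) := by
  simp only [book, fromRel_adj]
  tauto

lemma card_bound {V : Type*} (s : Set V) [Fintype s] {m : ℕ} (W : Fin m → V)
    (hinj : Function.Injective W) (hmem : ∀ t, W t ∈ s) : m ≤ Fintype.card s := by
  simpa using Fintype.card_le_of_injective (fun t => (⟨W t, hmem t⟩ : s))
    (fun a b h => hinj (congrArg Subtype.val h))

lemma copy_data {V : Type*} {K : SimpleGraph V} {G' : K.Subgraph} {p : ℕ}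
    (h : IsCopy (book p) G') :
    ∃ φ : Fin (p+2) → V, Function.Injective φ ∧ (∀ i, φ i ∈ G'.verts) ∧
      (∀ i j, G'.Adj (φ i) (φ j) ↔ (i ≠ j ∧ (i.val < 2 ∨ j.val < 2))) ∧
      (∀ x ∈ G'.verts, ∃ i, φ i = x) := by
  obtain ⟨g⟩ := h
  refine ⟨fun i => (g.symm i : V), ?_, fun i => (g.symm i).2, ?_, ?_⟩
  · exact Subtype.coe_injective.comp (g.symm.toEquiv.injective)
  · intro i j
    rw [← book_adj, ← Subgraph.coe_adj, g.symm.map_adj_iff]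
  · intro x hx
    exact ⟨g ⟨x, hx⟩, by simp⟩

lemma part1 {V : Type*} [Fintype V] {G : SimpleGraph V} [DecidableRel G.Adj]
    {q p : ℕ} (hq : q + 2 ≤ p)
    (hcard : ∀ a b : V, G.Adj a b → Fintype.card (G.commonNeighbors a b) = q)
    (G' : G.Subgraph) : ¬ IsCopy (book p) G' := by
  intro h
  obtain ⟨φ, hinj, hmem, hadj, hsurj⟩ := copy_data h
  have h01 : ((0 : Fin (p+2))) ≠ 1 := by simp [Fin.ext_iff]
  have hab : G.Adj (φ 0) (φ 1) := G'.adj_sub ((hadj 0 1).mpr ⟨h01, Or.inl (by simp)⟩)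
  have hWinj : Function.Injective (fun t : Fin p => φ ⟨t.val + 2, by omega⟩) := by
    intro t t' h
    have := hinj h
    apply Fin.ext
    simpa [Fin.ext_iff] using this
  have hWmem : ∀ t : Fin p, φ ⟨t.val + 2, by omega⟩ ∈ G.commonNeighbors (φ 0) (φ 1) := by
    intro t
    rw [mem_commonNeighbors]
    refine ⟨G'.adj_sub ((hadj 0 ⟨t.val+2, by omega⟩).mpr ⟨by simp [Fin.ext_iff], Or.inl (by simp)⟩),
      G'.adj_sub ((hadj 1 ⟨t.val+2, by omega⟩).mpr ⟨by simp [Fin.ext_iff], Or.inl (by simp)⟩)⟩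
  have := card_bound _ _ hWinj hWmem
  rw [hcard _ _ hab] at this
  omega

lemma exists_copy {V : Type*} [Fintype V] (G : SimpleGraph V) [DecidableRel G.Adj]
    {u v : V} {p : ℕ} (huv : u ≠ v) (hnadj : ¬G.Adj u v)
    (hp : Fintype.card ↥(G.commonNeighbors u v) = p) :
    ∃ G' : (G ⊔ fromEdgeSet {s(u,v)}).Subgraph,
      G'.verts = {u, v} ∪ G.commonNeighbors u v ∧
      (∀ x y, G'.Adj x y ↔ x ≠ y ∧ x ∈ ({u, v} ∪ G.commonNeighbors u v : Set V) ∧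
        y ∈ ({u, v} ∪ G.commonNeighbors u v : Set V) ∧ (x = u ∨ x = v ∨ y = u ∨ y = v)) ∧
      IsCopy (book p) G' := by
  classical
  set C := G.commonNeighbors u v with hC
  have huC : u ∉ C := fun h => G.irrefl ((mem_commonNeighbors G).mp h).1
  have hvC : v ∉ C := fun h => G.irrefl ((mem_commonNeighbors G).mp h).2
  set S : Set V := {u, v} ∪ C with hS
  have hSu : u ∈ S := Or.inl (Set.mem_insert _ _)
  have hSv : v ∈ S := Or.inl (Set.mem_insert_of_mem _ rfl)
  have hSC : ∀ x ∈ C, x ∈ S := fun x hx => Or.inr hx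
  -- the key adjacency-to-supergraph lemma
  have key : ∀ a b : V, a ≠ b → b ∈ S → (a = u ∨ a = v) →
      (G ⊔ fromEdgeSet {s(u,v)}).Adj a b := by
    intro a b hab hb hor
    rcases hb with hb | hb
    · rcases hb with rfl | rfl
      · -- b = u
        rcases hor with rfl | rfl
        · exact absurd rfl hab
        · exact Or.inr (by simp [Sym2.eq_swap, hab])
      · -- b = v
        rcases hor with rfl | rfl
        · exact Or.inr (by simp [hab])
        · exact absurd rfl hab
    · rcases hor with rfl | rfl
      · exact Or.inl ((mem_commonNeighbors G).mp hb).1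
      · exact Or.inl ((mem_commonNeighbors G).mp hb).2
  refine ⟨⟨S, fun x y => x ≠ y ∧ x ∈ S ∧ y ∈ S ∧ (x = u ∨ x = v ∨ y = u ∨ y = v),
      ?_, fun h => h.2.1, ?_⟩, rfl, fun x y => Iff.rfl, ?_⟩
  · rintro x y ⟨hxy, hx, hy, hor⟩
    rcases hor with h | h | h | h
    · exact key x y hxy hy (Or.inl h)
    · exact key x y hxy hy (Or.inr h)
    · exact (key y x hxy.symm hx (Or.inl h)).symm
    · exact (key y x hxy.symm hx (Or.inr h)).symm
  · refine ⟨?_⟩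
    rintro x y ⟨hxy, hx, hy, hor⟩
    exact ⟨hxy.symm, hy, hx, by tauto⟩
  -- now the isomorphism
  · have htwo : ∀ m : ℕ, m < 2 → m = 0 ∨ m = 1 := fun m hm => by omega
    let c : ↥C ≃ Fin p := Fintype.equivFinOfCardEq hp
    let f : Fin (p+2) → ↥S := fun i =>
      if h0 : (i : ℕ) = 0 then ⟨u, hSu⟩
      else if h1 : (i : ℕ) = 1 then ⟨v, hSv⟩
      else ⟨(c.symm ⟨(i : ℕ) - 2, by omega⟩ : ↥C).val, hSC _ (c.symm _).2⟩
    have hf0 : ∀ i : Fin (p+2), (i : ℕ) = 0 → (f i).val = u := by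
      intro i h; simp only [f, dif_pos h]
    have hf1 : ∀ i : Fin (p+2), (i : ℕ) = 1 → (f i).val = v := by
      intro i h; simp only [f]
      rw [dif_neg (by omega), dif_pos h]
    have hf2 : ∀ (i : Fin (p+2)) (h2 : 2 ≤ (i : ℕ)),
        (f i).val = (c.symm ⟨(i : ℕ) - 2, by omega⟩ : ↥C).val := by
      intro i h
      simp only [f]
      rw [dif_neg (by omega), dif_neg (by omega)]
    have hfC : ∀ (i : Fin (p+2)), 2 ≤ (i : ℕ) → (f i).val ∈ C := by
      intro i h; rw [hf2 i h]; exact (c.symm _).2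
    have hlt : ∀ i : Fin (p+2), ((f i).val = u ∨ (f i).val = v) ↔ (i : ℕ) < 2 := by
      intro i
      constructor
      · intro h
        by_contra hc
        have := hfC i (by omega)
        rcases h with h | h
        · rw [h] at this; exact huC this
        · rw [h] at this; exact hvC this
      · intro h
        rcases htwo _ h with h | h
        · exact Or.inl (hf0 i h)
        · exact Or.inr (hf1 i h)
    have hfinj : ∀ i j : Fin (p+2), (f i).val = (f j).val → i = j := by
      intro i j h
      have hi := i.isLt
      have hj := j.isLt
      rcases Nat.lt_or_ge (i : ℕ) 2 with hi2 | hi2 <;>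
        rcases Nat.lt_or_ge (j : ℕ) 2 with hj2 | hj2
      · rcases htwo _ hi2 with h0 | h0 <;>
          rcases htwo _ hj2 with h0' | h0'
        · exact Fin.ext (by omega)
        · rw [hf0 i h0, hf1 j h0'] at h; exact absurd h huv
        · rw [hf1 i h0, hf0 j h0'] at h; exact absurd h.symm huv
        · exact Fin.ext (by omega)
      · exfalso
        have hC' := hfC j hj2
        rcases htwo _ hi2 with h0 | h0
        · rw [hf0 i h0] at h; rw [← h] at hC'; exact huC hC'
        · rw [hf1 i h0] at h; rw [← h] at hC'; exact hvC hC'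
      · exfalso
        have hC' := hfC i hi2
        rcases htwo _ hj2 with h0 | h0
        · rw [hf0 j h0] at h; rw [h] at hC'; exact huC hC'
        · rw [hf1 j h0] at h; rw [h] at hC'; exact hvC hC'
      · rw [hf2 i hi2, hf2 j hj2] at h
        have := c.symm.injective (Subtype.coe_injective h)
        have : (i : ℕ) - 2 = (j : ℕ) - 2 := congrArg Fin.val this
        exact Fin.ext (by omega)
    have hbij : Function.Bijective f := by
      constructor
      · intro i j h
        exact hfinj i j (congrArg Subtype.val h)
      · rintro ⟨x, hx⟩
        rcases hx with hx | hx
        · rcases hx with rfl | rfl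
          · exact ⟨⟨0, by omega⟩, Subtype.ext (hf0 _ rfl)⟩
          · exact ⟨⟨1, by omega⟩, Subtype.ext (hf1 _ rfl)⟩
        · refine ⟨⟨(c ⟨x, hx⟩ : ℕ) + 2, by have := (c ⟨x, hx⟩).isLt; omega⟩, Subtype.ext ?_⟩
          rw [hf2 _ (Nat.le_add_left 2 _)]
          have : (⟨((⟨(c ⟨x, hx⟩ : ℕ) + 2, by have := (c ⟨x, hx⟩).isLt; omega⟩ : Fin (p+2)) : ℕ) - 2,
              by have := (c ⟨x, hx⟩).isLt; simp only [Fin.val_mk]; omega⟩ : Fin p) = c ⟨x, hx⟩ := Fin.ext (by simp)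
          rw [this]
          simp
    refine ⟨RelIso.symm ⟨Equiv.ofBijective f hbij, ?_⟩⟩
    intro i j
    simp only [Equiv.ofBijective_apply, Subgraph.coe_adj]
    show (f i).val ≠ (f j).val ∧ (f i).val ∈ S ∧ (f j).val ∈ S ∧ _ ↔ (book p).Adj i j
    rw [book_adj]
    constructor
    · rintro ⟨hne, -, -, hor⟩
      refine ⟨fun hij => hne (by rw [hij]), ?_⟩
      rcases hor with h | h | h | h
      · exact Or.inl ((hlt i).mp (Or.inl h))
      · exact Or.inl ((hlt i).mp (Or.inr h))
      · exact Or.inr ((hlt j).mp (Or.inl h))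
      · exact Or.inr ((hlt j).mp (Or.inr h))
    · rintro ⟨hij, hor⟩
      refine ⟨fun h => hij (hfinj i j h), (f i).2, (f j).2, ?_⟩
      rcases hor with h | h
      · rcases (hlt i).mpr h with h' | h'
        · exact Or.inl h'
        · exact Or.inr (Or.inl h')
      · rcases (hlt j).mpr h with h' | h'
        · exact Or.inr (Or.inr (Or.inl h'))
        · exact Or.inr (Or.inr (Or.inr h'))

lemma copy_unique {V : Type*} [Fintype V] (G : SimpleGraph V) [DecidableRel G.Adj]
    {u v : V} {q p : ℕ} (huv : u ≠ v) (hnadj : ¬G.Adj u v) (hq : q + 2 ≤ p)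
    (hcard : ∀ a b : V, G.Adj a b → Fintype.card ↥(G.commonNeighbors a b) = q)
    (hp : Fintype.card ↥(G.commonNeighbors u v) = p)
    (G'' : (G ⊔ fromEdgeSet {s(u,v)}).Subgraph) (h : IsCopy (book p) G'') :
    G''.verts = {u, v} ∪ G.commonNeighbors u v ∧
      ∀ x y, G''.Adj x y ↔ x ≠ y ∧ x ∈ ({u, v} ∪ G.commonNeighbors u v : Set V) ∧
        y ∈ ({u, v} ∪ G.commonNeighbors u v : Set V) ∧ (x = u ∨ x = v ∨ y = u ∨ y = v) := by
  classical
  have htwo : ∀ m : ℕ, m < 2 → m = 0 ∨ m = 1 := fun m hm => by omega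
  obtain ⟨φ, hinj, hmem, hadj, hsurj⟩ := copy_data h
  set W : Fin p → V := fun t => φ ⟨t.val + 2, by omega⟩ with hWdef
  have hWinj : Function.Injective W := by
    intro t t' ht
    have := hinj ht
    exact Fin.ext (by simpa [Fin.ext_iff] using this)
  -- the root edge is adjacent in the supergraph
  have hab : (G ⊔ fromEdgeSet {s(u,v)}).Adj (φ 0) (φ 1) :=
    G''.adj_sub ((hadj 0 1).mpr ⟨by simp [Fin.ext_iff], Or.inl (by simp)⟩)
  have hHW : ∀ t : Fin p, (G ⊔ fromEdgeSet {s(u,v)}).Adj (φ 0) (W t) ∧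
      (G ⊔ fromEdgeSet {s(u,v)}).Adj (φ 1) (W t) := by
    intro t
    constructor
    · exact G''.adj_sub ((hadj 0 ⟨t.val + 2, by omega⟩).mpr
        ⟨by simp [Fin.ext_iff], Or.inl (by simp)⟩)
    · exact G''.adj_sub ((hadj 1 ⟨t.val + 2, by omega⟩).mpr
        ⟨by simp [Fin.ext_iff], Or.inl (by simp)⟩)
  -- the root edge is not a G-edge
  have hGab : ¬ G.Adj (φ 0) (φ 1) := by
    intro hG
    have hforb : ¬((φ 0 = v ∨ φ 1 = v) ∧ (φ 0 = u ∨ φ 1 = u)) := by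
      rintro ⟨h1 | h1, h2 | h2⟩
      · exact huv (h2.symm.trans h1)
      · rw [h1] at hG; rw [h2] at hG; exact hnadj hG.symm
      · rw [h1] at hG; rw [h2] at hG; exact hnadj hG
      · exact huv (h2.symm.trans h1)
    have hT : ∀ t : Fin p, W t ∉ G.commonNeighbors (φ 0) (φ 1) →
        (W t = u ∧ (φ 0 = v ∨ φ 1 = v)) ∨ (W t = v ∧ (φ 0 = u ∨ φ 1 = u)) := by
      intro t ht
      rw [mem_commonNeighbors G] at ht
      rcases (sup_adj _ _ _ _).mp (hHW t).1 with hA | hA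
      · rcases (sup_adj _ _ _ _).mp (hHW t).2 with hB | hB
        · exact absurd ⟨hA, hB⟩ ht
        · have := Set.mem_singleton_iff.mp hB.1
          rcases Sym2.eq_iff.mp this with ⟨h1, h2⟩ | ⟨h1, h2⟩
          · exact Or.inr ⟨h2, Or.inr h1⟩
          · exact Or.inl ⟨h2, Or.inr h1⟩
      · have := Set.mem_singleton_iff.mp hA.1
        rcases Sym2.eq_iff.mp this with ⟨h1, h2⟩ | ⟨h1, h2⟩
        · exact Or.inr ⟨h2, Or.inl h1⟩
        · exact Or.inl ⟨h2, Or.inl h1⟩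
    have hneg : (Finset.univ.filter
        (fun t : Fin p => ¬ (W t ∈ G.commonNeighbors (φ 0) (φ 1)))).card ≤ 1 := by
      refine Finset.card_le_one.mpr ?_
      intro t ht t' ht'
      have h1 := hT t (Finset.mem_filter.mp ht).2
      have h2 := hT t' (Finset.mem_filter.mp ht').2
      rcases h1 with ⟨e1, d1⟩ | ⟨e1, d1⟩ <;> rcases h2 with ⟨e2, d2⟩ | ⟨e2, d2⟩
      · exact hWinj (e1.trans e2.symm)
      · exact absurd ⟨d1, d2⟩ hforb
      · exact absurd ⟨d2, d1⟩ hforb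
      · exact hWinj (e1.trans e2.symm)
    have hsplit := Finset.card_filter_add_card_filter_not
      (s := (Finset.univ : Finset (Fin p)))
      (p := fun t : Fin p => W t ∈ G.commonNeighbors (φ 0) (φ 1))
    have hposcard : (Finset.univ.filter
        (fun t : Fin p => W t ∈ G.commonNeighbors (φ 0) (φ 1))).card ≤ q := by
      have hinj2 : Function.Injective
          (fun t : ↥(Finset.univ.filter
              (fun t : Fin p => W t ∈ G.commonNeighbors (φ 0) (φ 1))) =>
            (⟨W t.val, (Finset.mem_filter.mp t.2).2⟩ :
              ↥(G.commonNeighbors (φ 0) (φ 1)))) := by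
        intro s s' hss
        exact Subtype.ext (hWinj (congrArg Subtype.val hss))
      have := Fintype.card_le_of_injective _ hinj2
      rwa [Fintype.card_coe, hcard _ _ hG] at this
    simp only [Finset.card_univ, Fintype.card_fin] at hsplit
    omega
  have huvab : s(φ 0, φ 1) = s(u, v) := by
    rcases (sup_adj _ _ _ _).mp hab with hA | hA
    · exact absurd hA hGab
    · exact Set.mem_singleton_iff.mp hA.1
  have hab2 : (φ 0 = u ∧ φ 1 = v) ∨ (φ 0 = v ∧ φ 1 = u) := Sym2.eq_iff.mp huvab
  have hiff : ∀ x : V, (x = φ 0 ∨ x = φ 1) ↔ (x = u ∨ x = v) := by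
    intro x
    rcases hab2 with ⟨h1, h2⟩ | ⟨h1, h2⟩ <;> rw [h1, h2] <;> tauto
  have hCN : G.commonNeighbors (φ 0) (φ 1) = G.commonNeighbors u v := by
    rcases hab2 with ⟨h1, h2⟩ | ⟨h1, h2⟩ <;> rw [h1, h2]
    exact commonNeighbors_symm G v u
  -- every page is a common neighbor of u and v
  have hWC : ∀ t : Fin p, W t ∈ G.commonNeighbors u v := by
    intro t
    have hWnot : ¬(W t = u ∨ W t = v) := by
      intro hw
      rcases (hiff (W t)).mpr hw with h | h
      · have := hinj h
        simp [Fin.ext_iff] at this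
      · have := hinj h
        simp [Fin.ext_iff] at this
    rw [← hCN, mem_commonNeighbors G]
    constructor
    · rcases (sup_adj _ _ _ _).mp (hHW t).1 with hA | hA
      · exact hA
      · exfalso
        rcases Sym2.eq_iff.mp (Set.mem_singleton_iff.mp hA.1) with ⟨h1, h2⟩ | ⟨h1, h2⟩
        · exact hWnot (Or.inr h2)
        · exact hWnot (Or.inl h2)
    · rcases (sup_adj _ _ _ _).mp (hHW t).2 with hA | hA
      · exact hA
      · exfalso
        rcases Sym2.eq_iff.mp (Set.mem_singleton_iff.mp hA.1) with ⟨h1, h2⟩ | ⟨h1, h2⟩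
        · exact hWnot (Or.inr h2)
        · exact hWnot (Or.inl h2)
  -- pages exhaust the common neighbors
  have hWsurj : ∀ x ∈ G.commonNeighbors u v, ∃ t : Fin p, W t = x := by
    have hbij : Function.Bijective (fun t : Fin p => (⟨W t, hWC t⟩ : ↥(G.commonNeighbors u v))) := by
      rw [Fintype.bijective_iff_injective_and_card]
      constructor
      · intro t t' ht
        exact hWinj (congrArg Subtype.val ht)
      · simp [hp]
    intro x hx
    obtain ⟨t, ht⟩ := hbij.2 ⟨x, hx⟩
    exact ⟨t, congrArg Subtype.val ht⟩
  have hidx : ∀ i : Fin (p+2), (φ i = u ∨ φ i = v) → (i : ℕ) < 2 := by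
    intro i hi
    rcases (hiff (φ i)).mpr hi with h | h
    · rw [hinj h]; simp
    · rw [hinj h]; simp
  have hidx' : ∀ i : Fin (p+2), (i : ℕ) < 2 → (φ i = u ∨ φ i = v) := by
    intro i hi
    rcases htwo _ hi with h | h
    · have : i = 0 := Fin.ext (by simpa using h)
      rw [this]; exact (hiff _).mp (Or.inl rfl)
    · have : i = 1 := Fin.ext (by simpa using h)
      rw [this]; exact (hiff _).mp (Or.inr rfl)
  have hverts : G''.verts = {u, v} ∪ G.commonNeighbors u v := by
    apply Set.ext
    intro x
    constructor
    · intro hx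
      obtain ⟨i, rfl⟩ := hsurj x hx
      rcases Nat.lt_or_ge (i : ℕ) 2 with h2 | h2
      · rcases hidx' i h2 with h | h <;> rw [h] <;> simp
      · have hieq : i = ⟨(i : ℕ) - 2 + 2, by omega⟩ := Fin.ext (by simp; omega)
        rw [hieq]
        exact Or.inr (hWC ⟨(i : ℕ) - 2, by omega⟩)
    · intro hx
      rcases hx with hx | hx
      · rcases hx with hx | hx
        · rcases (hiff u).mpr (Or.inl rfl) with h | h
          · have h0 := hmem 0; rw [← h] at h0; rwa [hx]
          · have h0 := hmem 1; rw [← h] at h0; rwa [hx]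
        · have hx' : x = v := hx
          rcases (hiff v).mpr (Or.inr rfl) with h | h
          · have h0 := hmem 0; rw [← h] at h0; rwa [hx']
          · have h0 := hmem 1; rw [← h] at h0; rwa [hx']
      · obtain ⟨t, rfl⟩ := hWsurj x hx
        exact hmem ⟨t.val + 2, by omega⟩
  refine ⟨hverts, ?_⟩
  intro x y
  constructor
  · intro hxy
    have hx := G''.edge_vert hxy
    have hy := G''.edge_vert hxy.symm
    have hne := (G''.adj_sub hxy).ne
    refine ⟨hne, hverts ▸ hx, hverts ▸ hy, ?_⟩
    obtain ⟨i, rfl⟩ := hsurj x hx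
    obtain ⟨j, rfl⟩ := hsurj y hy
    rcases ((hadj i j).mp hxy).2 with h2 | h2
    · rcases hidx' i h2 with h | h
      · exact Or.inl h
      · exact Or.inr (Or.inl h)
    · rcases hidx' j h2 with h | h
      · exact Or.inr (Or.inr (Or.inl h))
      · exact Or.inr (Or.inr (Or.inr h))
  · rintro ⟨hxy, hx, hy, hor⟩
    rw [← hverts] at hx hy
    obtain ⟨i, rfl⟩ := hsurj x hx
    obtain ⟨j, rfl⟩ := hsurj y hy
    refine (hadj i j).mpr ⟨fun hij => hxy (by rw [hij]), ?_⟩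
    rcases hor with h | h | h | h
    · exact Or.inl (hidx i (Or.inl h))
    · exact Or.inl (hidx i (Or.inr h))
    · exact Or.inr (hidx j (Or.inl h))
    · exact Or.inr (hidx j (Or.inr h))

theorem stmt17 {V : Type*} [Fintype V] (G : SimpleGraph V) [DecidableRel G.Adj]
    (n k q p : ℕ) (hq : q + 2 ≤ p)
    (hsrg : G.IsSRGWith n k q p) (hnc : G ≠ ⊤) (hne : G ≠ ⊥) :
    UniquelySaturated (book p) G := by
  constructor
  · exact part1 hq hsrg.of_adj
  · intro u v huv hnadj
    have hp := hsrg.of_not_adj huv hnadj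
    obtain ⟨G', hverts, hadj, hcopy⟩ := exists_copy G huv hnadj hp
    refine ⟨G', hcopy, ?_⟩
    intro G'' h''
    obtain ⟨hverts2, hadj2⟩ := copy_unique G huv hnadj hq hsrg.of_adj hp G'' h''
    apply Subgraph.ext
    · rw [hverts2, hverts]
    · funext x y
      exact propext ((hadj2 x y).trans ((hadj x y).symm))
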